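/- Let R(ξ) = W(ξ) P_R W(−ξ) with W(ξ) = diag(e^{2πi ξ t_k}), 0 < t_1 < ... < t_{n_e}, and P_R an orthogonal projector. Let τ_S = 4π(t_{n_e} − t_1) and τ = 4π t_{n_e}. Then the operator norm satisfies ‖R^{(n)}(ξ)‖ ≤ τ^n e^{τ_S |Im(ξ)|/2} for all n ≥ 0 and ξ ∈ ℂ. -/

import Mathlib

open Complex Matrix

lemma diag_clm_norm_le {m : ℕ} (d : Fin m → ℂ) (c : ℝ) (hc : 0 ≤ c) (h : ∀ k, ‖d k‖ ≤ c) :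
    ‖Matrix.toEuclideanCLM (𝕜 := ℂ) (Matrix.diagonal d)‖ ≤ c := by
  refine ContinuousLinearMap.opNorm_le_bound _ hc (fun x => ?_)
  have key : ∀ i, (Matrix.toEuclideanCLM (𝕜 := ℂ) (Matrix.diagonal d) x) i = d i * x i := by
    intro i
    have h1 := congrFun (Matrix.ofLp_toEuclideanCLM (𝕜 := ℂ) (Matrix.diagonal d) x) i
    simpa [Matrix.toLin'_apply, Matrix.mulVec_diagonal] using h1
  rw [EuclideanSpace.norm_eq, EuclideanSpace.norm_eq]
  have hsum : ∑ i, ‖(Matrix.toEuclideanCLM (𝕜 := ℂ) (Matrix.diagonal d) x) i‖ ^ 2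
      ≤ c ^ 2 * ∑ i, ‖x i‖ ^ 2 := by
    rw [Finset.mul_sum]
    refine Finset.sum_le_sum fun i _ => ?_
    rw [key i, norm_mul, mul_pow]
    exact mul_le_mul_of_nonneg_right (pow_le_pow_left₀ (norm_nonneg _) (h i) 2) (sq_nonneg _)
  calc Real.sqrt (∑ i, ‖(Matrix.toEuclideanCLM (𝕜 := ℂ) (Matrix.diagonal d) x) i‖ ^ 2)
      ≤ Real.sqrt (c ^ 2 * ∑ i, ‖x i‖ ^ 2) := Real.sqrt_le_sqrt hsum
    _ = c * Real.sqrt (∑ i, ‖x i‖ ^ 2) := by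
        rw [Real.sqrt_mul (sq_nonneg c), Real.sqrt_sq hc]

noncomputable def Wmat {ne : ℕ} (t : Fin ne → ℝ) (ξ : ℂ) : Matrix (Fin ne) (Fin ne) ℂ :=
  Matrix.diagonal fun k => Complex.exp (2 * Real.pi * Complex.I * ξ * (t k))

noncomputable def PRabs {ne : ℕ} (P : Matrix (Fin ne) (Fin ne) ℂ) : Prop :=
  P * P = P ∧ Pᴴ = P

noncomputable def Rres' {ne : ℕ} (t : Fin ne → ℝ) (P : Matrix (Fin ne) (Fin ne) ℂ)
    (ξ : ℂ) : Matrix (Fin ne) (Fin ne) ℂ :=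
  Wmat t ξ * P * Wmat t (-ξ)

set_option maxHeartbeats 1000000 in
set_option synthInstance.maxHeartbeats 200000 in
theorem stmt_13 (ne : ℕ) (t : Fin (ne + 1) → ℝ) (ht0 : 0 < t 0) (htm : StrictMono t)
    (P : Matrix (Fin (ne + 1)) (Fin (ne + 1)) ℂ) (hP : PRabs P)
    (τS τ : ℝ) (hτS : τS = 4 * Real.pi * (t (Fin.last ne) - t 0))
    (hτ : τ = 4 * Real.pi * t (Fin.last ne))
    (Rn : ℕ → ℂ → Matrix (Fin (ne + 1)) (Fin (ne + 1)) ℂ)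
    (hRn0 : Rn 0 = Rres' t P)
    (hRnD : ∀ n ξ i j, HasDerivAt (fun z => Rn n z i j) (Rn (n + 1) ξ i j) ξ) :
    ∀ (n : ℕ) (ξ : ℂ),
      ‖Matrix.toEuclideanCLM (𝕜 := ℂ) (Rn n ξ)‖ ≤ τ ^ n * Real.exp (τS * |ξ.im| / 2) := by
  set π : ℝ := Real.pi with hπ
  have hπpos := Real.pi_pos
  have htle : ∀ k, t k ≤ t (Fin.last ne) := fun k => htm.monotone (Fin.le_last k)
  have htpos : ∀ k, 0 < t k := fun k => lt_of_lt_of_le ht0 (htm.monotone (Fin.zero_le k))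
  -- explicit formula
  set F : ℕ → ℂ → Matrix (Fin (ne + 1)) (Fin (ne + 1)) ℂ :=
    fun n ξ => Matrix.of fun i j =>
      (2 * (π : ℂ) * I * ((t i : ℂ) - (t j : ℂ))) ^ n *
        Complex.exp (2 * (π : ℂ) * I * ξ * ((t i : ℂ) - (t j : ℂ))) * P i j with hF
  have hRnF : ∀ n ξ, Rn n ξ = F n ξ := by
    intro n
    induction n with
    | zero =>
      intro ξ
      rw [hRn0]
      ext i j
      simp only [Rres', Wmat, hF, Matrix.mul_diagonal, Matrix.diagonal_mul, Matrix.of_apply,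
        pow_zero, one_mul]
      rw [mul_right_comm, ← Complex.exp_add]
      congr 2
      ring
    | succ n ih =>
      intro ξ
      ext i j
      have hd : HasDerivAt (fun z => Rn n z i j) (F (n + 1) ξ i j) ξ := by
        have hz : (fun z => Rn n z i j) = fun z =>
            (2 * (π : ℂ) * I * ((t i : ℂ) - (t j : ℂ))) ^ n *
              Complex.exp ((2 * (π : ℂ) * I * ((t i : ℂ) - (t j : ℂ))) * z) * P i j := by
          funext z
          rw [ih z]
          simp only [hF, Matrix.of_apply]
          ring_nf
        rw [hz]
        have h1 : HasDerivAt (fun z : ℂ =>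
            Complex.exp ((2 * (π : ℂ) * I * ((t i : ℂ) - (t j : ℂ))) * z))
            (Complex.exp ((2 * (π : ℂ) * I * ((t i : ℂ) - (t j : ℂ))) * ξ) *
              (2 * (π : ℂ) * I * ((t i : ℂ) - (t j : ℂ)))) ξ := by
          simpa using ((hasDerivAt_id ξ).const_mul
            (2 * (π : ℂ) * I * ((t i : ℂ) - (t j : ℂ)))).cexp
        have h2 := (h1.const_mul ((2 * (π : ℂ) * I * ((t i : ℂ) - (t j : ℂ))) ^ n)).mul_const
          (P i j)
        refine h2.congr_deriv ?_
        simp only [hF, Matrix.of_apply, pow_succ]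
        ring_nf
      exact (hd.unique (hRnD n ξ i j)).symm
  -- factorization
  set c₀ : ℝ := (t 0 + t (Fin.last ne)) / 2 with hc₀
  set D : ℂ → Matrix (Fin (ne + 1)) (Fin (ne + 1)) ℂ :=
    fun ξ => Matrix.diagonal fun k => Complex.exp (2 * (π : ℂ) * I * ξ * ((t k : ℂ) - (c₀ : ℂ)))
    with hD
  set N : ℕ → Matrix (Fin (ne + 1)) (Fin (ne + 1)) ℂ :=
    fun n => Matrix.of fun i j => (2 * (π : ℂ) * I * ((t i : ℂ) - (t j : ℂ))) ^ n * P i j with hN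
  have hfact : ∀ n ξ, F n ξ = D ξ * N n * D (-ξ) := by
    intro n ξ
    ext i j
    simp only [hF, hD, hN, Matrix.mul_diagonal, Matrix.diagonal_mul, Matrix.of_apply]
    conv_rhs => rw [mul_right_comm, ← Complex.exp_add]
    have he : 2 * (π:ℂ) * I * ξ * ((t i : ℂ) - (c₀ : ℂ))
        + 2 * (π:ℂ) * I * (-ξ) * ((t j : ℂ) - (c₀ : ℂ))
        = 2 * (π:ℂ) * I * ξ * ((t i : ℂ) - (t j : ℂ)) := by ring
    rw [he]
    ring
  -- commutator recursion for N
  set T : Matrix (Fin (ne + 1)) (Fin (ne + 1)) ℂ := Matrix.diagonal fun k => (t k : ℂ) with hT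
  have hNrec : ∀ n, N (n + 1) = (2 * (π : ℂ) * I) • (T * N n - N n * T) := by
    intro n
    ext i j
    simp only [hN, hT, Matrix.smul_apply, Matrix.sub_apply, Matrix.mul_diagonal,
      Matrix.diagonal_mul, Matrix.of_apply, smul_eq_mul, pow_succ]
    ring
  -- norms
  have hTnorm : ‖Matrix.toEuclideanCLM (𝕜 := ℂ) T‖ ≤ t (Fin.last ne) := by
    refine diag_clm_norm_le _ _ (le_of_lt (lt_of_lt_of_le ht0 (htle 0))) fun k => ?_
    rw [Complex.norm_real, Real.norm_eq_abs, abs_of_pos (htpos k)]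
    exact htle k
  have hPnorm : ‖Matrix.toEuclideanCLM (𝕜 := ℂ) P‖ ≤ 1 := by
    set Q := Matrix.toEuclideanCLM (𝕜 := ℂ) P with hQ
    have h1 : Q * Q = Q := by rw [hQ, ← _root_.map_mul, hP.1]
    have h2 : star Q = Q := by
      rw [hQ, ← map_star]
      congr 1
      rw [Matrix.star_eq_conjTranspose, hP.2]
    have h3 : ‖Q‖ * ‖Q‖ = ‖Q‖ := by
      conv_lhs => rw [← CStarRing.norm_star_mul_self (x := Q)]
      rw [h2, h1]
    nlinarith [norm_nonneg Q]
  have hτpos : 0 < τ := by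
    rw [hτ]; exact mul_pos (by positivity) (htpos (Fin.last ne))
  have hNnorm : ∀ n, ‖Matrix.toEuclideanCLM (𝕜 := ℂ) (N n)‖ ≤ τ ^ n := by
    intro n
    induction n with
    | zero =>
      simp only [pow_zero]
      have : N 0 = P := by ext i j; simp [hN]
      rw [this]; exact hPnorm
    | succ n ih =>
      rw [hNrec n, _root_.map_smul, map_sub, _root_.map_mul, _root_.map_mul]
      have hb : ‖Matrix.toEuclideanCLM (𝕜 := ℂ) T * Matrix.toEuclideanCLM (𝕜 := ℂ) (N n)
          - Matrix.toEuclideanCLM (𝕜 := ℂ) (N n) * Matrix.toEuclideanCLM (𝕜 := ℂ) T‖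
          ≤ 2 * t (Fin.last ne) * τ ^ n := by
        have hNn0 : (0:ℝ) ≤ ‖Matrix.toEuclideanCLM (𝕜 := ℂ) (N n)‖ := norm_nonneg _
        have htl0 : (0:ℝ) ≤ t (Fin.last ne) := le_of_lt (lt_of_lt_of_le ht0 (htle 0))
        calc ‖Matrix.toEuclideanCLM (𝕜 := ℂ) T * Matrix.toEuclideanCLM (𝕜 := ℂ) (N n)
          - Matrix.toEuclideanCLM (𝕜 := ℂ) (N n) * Matrix.toEuclideanCLM (𝕜 := ℂ) T‖
            ≤ ‖Matrix.toEuclideanCLM (𝕜 := ℂ) T * Matrix.toEuclideanCLM (𝕜 := ℂ) (N n)‖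
              + ‖Matrix.toEuclideanCLM (𝕜 := ℂ) (N n) * Matrix.toEuclideanCLM (𝕜 := ℂ) T‖ :=
              norm_sub_le _ _
          _ ≤ ‖Matrix.toEuclideanCLM (𝕜 := ℂ) T‖ * ‖Matrix.toEuclideanCLM (𝕜 := ℂ) (N n)‖
              + ‖Matrix.toEuclideanCLM (𝕜 := ℂ) (N n)‖ * ‖Matrix.toEuclideanCLM (𝕜 := ℂ) T‖ :=
              add_le_add (norm_mul_le _ _) (norm_mul_le _ _)
          _ ≤ 2 * t (Fin.last ne) * τ ^ n := by
              nlinarith [norm_nonneg (Matrix.toEuclideanCLM (𝕜 := ℂ) T), pow_nonneg (le_of_lt hτpos) n]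
      calc ‖(2 * (π : ℂ) * I) • (Matrix.toEuclideanCLM (𝕜 := ℂ) T * Matrix.toEuclideanCLM (𝕜 := ℂ) (N n)
          - Matrix.toEuclideanCLM (𝕜 := ℂ) (N n) * Matrix.toEuclideanCLM (𝕜 := ℂ) T)‖
          = ‖(2 * (π : ℂ) * I)‖ * ‖Matrix.toEuclideanCLM (𝕜 := ℂ) T * Matrix.toEuclideanCLM (𝕜 := ℂ) (N n)
          - Matrix.toEuclideanCLM (𝕜 := ℂ) (N n) * Matrix.toEuclideanCLM (𝕜 := ℂ) T‖ := by
            exact norm_smul (β := EuclideanSpace ℂ (Fin (ne+1)) →L[ℂ] EuclideanSpace ℂ (Fin (ne+1))) (2 * (π:ℂ) * I) _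
        _ ≤ (2 * π) * (2 * t (Fin.last ne) * τ ^ n) := by
            have : ‖(2 * (π : ℂ) * I)‖ = 2 * π := by
              simp [norm_mul, Complex.norm_real, abs_of_pos hπpos]
              exact hπpos.le
            rw [this]
            exact mul_le_mul_of_nonneg_left hb (by positivity)
        _ = τ ^ (n + 1) := by rw [hτ, pow_succ]; ring
  -- diagonal factor norm
  have hDnorm : ∀ ξ : ℂ, ‖Matrix.toEuclideanCLM (𝕜 := ℂ) (D ξ)‖
      ≤ Real.exp (τS * |ξ.im| / 4) := by
    intro ξ
    refine diag_clm_norm_le _ _ (Real.exp_nonneg _) fun k => ?_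
    rw [Complex.norm_exp, Real.exp_le_exp]
    have hre : (2 * (π : ℂ) * I * ξ * ((t k : ℂ) - (c₀ : ℂ))).re
        = -(2 * π * ξ.im * (t k - c₀)) := by
      simp only [Complex.mul_re, Complex.mul_im, Complex.I_re, Complex.I_im,
        Complex.ofReal_re, Complex.ofReal_im, Complex.sub_re, Complex.sub_im,
        Complex.re_ofNat, Complex.im_ofNat, Complex.neg_re, Complex.neg_im]
      ring
    rw [hre]
    have habs : |t k - c₀| ≤ (t (Fin.last ne) - t 0) / 2 := by
      rw [abs_le, hc₀]
      constructor
      · have := htm.monotone (Fin.zero_le k); linarith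
      · have := htle k; linarith
    have h1 : -(2 * π * ξ.im * (t k - c₀)) ≤ |2 * π * ξ.im * (t k - c₀)| := neg_le_abs _
    have h2 : |2 * π * ξ.im * (t k - c₀)| = 2 * π * |ξ.im| * |t k - c₀| := by
      rw [abs_mul, abs_mul]
      rw [abs_of_pos (by positivity : (0:ℝ) < 2 * π)]
    rw [hτS]
    calc -(2 * π * ξ.im * (t k - c₀)) ≤ 2 * π * |ξ.im| * |t k - c₀| := by rw [← h2]; exact h1
      _ ≤ 2 * π * |ξ.im| * ((t (Fin.last ne) - t 0) / 2) :=
          mul_le_mul_of_nonneg_left habs (by positivity)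
      _ = 4 * π * (t (Fin.last ne) - t 0) * |ξ.im| / 4 := by ring
  -- combine
  intro n ξ
  rw [hRnF n ξ, hfact n ξ, _root_.map_mul, _root_.map_mul]
  have hexp : Real.exp (τS * |ξ.im| / 4) * Real.exp (τS * |ξ.im| / 4)
      = Real.exp (τS * |ξ.im| / 2) := by
    rw [← Real.exp_add]; congr 1; ring
  have him : |(-ξ).im| = |ξ.im| := by simp
  calc ‖Matrix.toEuclideanCLM (𝕜 := ℂ) (D ξ) * Matrix.toEuclideanCLM (𝕜 := ℂ) (N n)
      * Matrix.toEuclideanCLM (𝕜 := ℂ) (D (-ξ))‖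
      ≤ ‖Matrix.toEuclideanCLM (𝕜 := ℂ) (D ξ) * Matrix.toEuclideanCLM (𝕜 := ℂ) (N n)‖
        * ‖Matrix.toEuclideanCLM (𝕜 := ℂ) (D (-ξ))‖ := norm_mul_le _ _
    _ ≤ (‖Matrix.toEuclideanCLM (𝕜 := ℂ) (D ξ)‖ * ‖Matrix.toEuclideanCLM (𝕜 := ℂ) (N n)‖)
        * ‖Matrix.toEuclideanCLM (𝕜 := ℂ) (D (-ξ))‖ :=
        mul_le_mul_of_nonneg_right (norm_mul_le _ _) (norm_nonneg _)
    _ ≤ (Real.exp (τS * |ξ.im| / 4) * τ ^ n) * Real.exp (τS * |ξ.im| / 4) := by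
        have h1 := hDnorm ξ
        have h2 := hDnorm (-ξ)
        rw [him] at h2
        have h3 := hNnorm n
        have := mul_le_mul (mul_le_mul h1 h3 (norm_nonneg _) (Real.exp_nonneg _)) h2
          (norm_nonneg _) (by positivity)
        exact this
    _ = τ ^ n * Real.exp (τS * |ξ.im| / 2) := by rw [← hexp]; ring
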